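/- Let K be a field of characteristic not 2, n ≥ 3, and let V be a linear subspace of M_n(K) such that every matrix in V has at most 2 eigenvalues in K. If A and B are matrices in V with rank at most 1 and trace 0, then tr(AB) = 0. -/
import Mathlib

open Polynomial Matrix

lemma aux_rank_le_one {K : Type*} [Field K] {n : ℕ} (A : Matrix (Fin n) (Fin n) K)
    (h : A.rank ≤ 1) : ∃ u v : Fin n → K, ∀ i j, A i j = u i * v j := by
  rw [Matrix.rank] at h
  obtain ⟨⟨w, hw⟩, hall⟩ := finrank_le_one_iff.mp h
  choose c hc using hall
  refine ⟨w, fun j => c ⟨A *ᵥ Pi.single j 1, ⟨Pi.single j 1, rfl⟩⟩, fun i j => ?_⟩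
  have h1 := hc ⟨A *ᵥ Pi.single j 1, ⟨Pi.single j 1, rfl⟩⟩
  have h2 : (A *ᵥ Pi.single j 1) i = A i j := by
    simp [Matrix.mulVec_single]
  rw [Subtype.ext_iff] at h1
  have := congrFun h1 i
  simp only [SetLike.val_smul, Pi.smul_apply, smul_eq_mul] at this
  rw [← h2, ← this]; ring

lemma aux_eval_charpoly {K : Type*} [Field K] {n : ℕ} (M : Matrix (Fin n) (Fin n) K) (t : K) :
    M.charpoly.eval t = (t • (1 : Matrix (Fin n) (Fin n) K) - M).det := by
  rw [Matrix.charpoly, ← Polynomial.coe_evalRingHom, RingHom.map_det]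
  congr 1
  ext i j
  by_cases hij : i = j <;>
    simp [charmatrix_apply, hij, Matrix.one_apply, Matrix.smul_apply]

/-- If `K` has characteristic not 2, `n ≥ 3`, and `V` is a linear subspace of
`M_n(K)` in which every matrix has at most 2 distinct eigenvalues in `K`, then for `A, B ∈ V`
of rank at most 1 and trace 0 one has `tr(AB) = 0`. -/
theorem stmt0 {K : Type*} [Field K] (hK : (2 : K) ≠ 0) (n : ℕ) (hn : 3 ≤ n)
    (V : Submodule K (Matrix (Fin n) (Fin n) K))
    (hspec : ∀ M ∈ V, {x : K | (Matrix.charpoly M).IsRoot x}.ncard ≤ 2)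
    (A B : Matrix (Fin n) (Fin n) K) (hA : A ∈ V) (hB : B ∈ V)
    (hArk : A.rank ≤ 1) (hBrk : B.rank ≤ 1)
    (hAtr : A.trace = 0) (hBtr : B.trace = 0) :
    (A * B).trace = 0 := by
  by_contra hc
  set c : K := (A * B).trace with hcdef
  obtain ⟨u, v, hu⟩ := aux_rank_le_one A hArk
  obtain ⟨p, q, hp⟩ := aux_rank_le_one B hBrk
  set r : K := ∑ i, u i * q i with hr
  set s : K := ∑ i, v i * p i with hs
  -- trace identities
  have htrA : (∑ i, u i * v i) = 0 := by
    rw [← hAtr, Matrix.trace]; exact Finset.sum_congr rfl fun i _ => (hu i i).symm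
  have htrB : (∑ i, p i * q i) = 0 := by
    rw [← hBtr, Matrix.trace]; exact Finset.sum_congr rfl fun i _ => (hp i i).symm
  have hcrs : c = r * s := by
    rw [hcdef, Matrix.trace]
    simp only [Matrix.diag_apply, Matrix.mul_apply, hu, hp]
    rw [hr, hs, Finset.sum_mul]
    refine Finset.sum_congr rfl fun i _ => ?_
    rw [Finset.mul_sum]
    exact Finset.sum_congr rfl fun j _ => by ring
  -- the matrix M
  set M : Matrix (Fin n) (Fin n) K := A + c • B with hM
  have hMV : M ∈ V := V.add_mem hA (V.smul_mem c hB)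
  have hMw : ∀ w : Fin n → K,
      M *ᵥ w = (∑ j, v j * w j) • u + (c * ∑ j, q j * w j) • p := by
    intro w
    funext i
    show (∑ j, (A + c • B) i j * w j) = _
    have : ∀ j, (A + c • B) i j * w j
        = u i * (v j * w j) + (c * p i) * (q j * w j) := by
      intro j
      simp only [Matrix.add_apply, Matrix.smul_apply, hu, hp, smul_eq_mul]
      ring
    rw [Finset.sum_congr rfl fun j _ => this j, Finset.sum_add_distrib,
      ← Finset.mul_sum, ← Finset.mul_sum]
    simp only [Pi.add_apply, Pi.smul_apply, smul_eq_mul]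
    ring
  -- roots from eigenvectors
  have hroot : ∀ (t : K) (w : Fin n → K), w ≠ 0 → M *ᵥ w = t • w →
      (Matrix.charpoly M).IsRoot t := by
    intro t w hw hMwt
    have hdet : (t • (1 : Matrix (Fin n) (Fin n) K) - M).det = 0 := by
      rw [← Matrix.exists_mulVec_eq_zero_iff]
      refine ⟨w, hw, ?_⟩
      rw [Matrix.sub_mulVec, Matrix.smul_mulVec, Matrix.one_mulVec, hMwt, sub_self]
    rw [Polynomial.IsRoot, aux_eval_charpoly, hdet]
  -- r, s nonzero
  have hrne : r ≠ 0 := fun h => hc (by rw [hcrs, h, zero_mul])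
  have hsne : s ≠ 0 := fun h => hc (by rw [hcrs, h, mul_zero])
  -- eigenvector for 0
  have hker : ∃ w : Fin n → K, w ≠ 0 ∧ (∑ j, v j * w j) = 0 ∧ (∑ j, q j * w j) = 0 := by
    set f : (Fin n → K) →ₗ[K] (Fin 2 → K) :=
      (Matrix.of ![v, q]).mulVecLin with hf
    have hker' : LinearMap.ker f ≠ ⊥ := by
      intro hbot
      have hinj : Function.Injective f := LinearMap.ker_eq_bot.mp hbot
      have := LinearMap.finrank_le_finrank_of_injective hinj
      simp [Module.finrank_pi] at this
      omega
    obtain ⟨w, hwmem, hwne⟩ := Submodule.exists_mem_ne_zero_of_ne_bot hker'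
    refine ⟨w, hwne, ?_, ?_⟩
    · have := congrFun (LinearMap.mem_ker.mp hwmem) 0
      simpa [hf, Matrix.mulVecLin_apply, Matrix.mulVec, dotProduct] using this
    · have := congrFun (LinearMap.mem_ker.mp hwmem) 1
      simpa [hf, Matrix.mulVecLin_apply, Matrix.mulVec, dotProduct] using this
  obtain ⟨w₀, hw₀ne, hvw₀, hqw₀⟩ := hker
  have hroot0 : (Matrix.charpoly M).IsRoot 0 := by
    refine hroot 0 w₀ hw₀ne ?_
    rw [hMw w₀, hvw₀, hqw₀, mul_zero, zero_smul, zero_smul, zero_smul, add_zero]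
  -- eigenvectors for ±c
  have heig : ∀ ε : K, ε * ε = 1 → (Matrix.charpoly M).IsRoot (ε * c) := by
    intro ε hε
    set w : Fin n → K := u + (ε * r) • p with hwdef
    have hwne : w ≠ 0 := by
      intro h
      have hui : ∀ i, u i = -(ε * r * p i) := by
        intro i
        have := congrFun h i
        simp only [hwdef, Pi.add_apply, Pi.smul_apply, smul_eq_mul, Pi.zero_apply] at this
        linear_combination this
      have key : r = -(ε * r) * ∑ i, p i * q i := by
        rw [Finset.mul_sum]
        nth_rewrite 1 [hr]
        exact Finset.sum_congr rfl fun i _ => by rw [hui i]; ring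
      rw [htrB, mul_zero] at key
      exact hrne key
    refine hroot (ε * c) w hwne ?_
    rw [hMw w]
    have h1 : (∑ j, v j * w j) = ε * c := by
      simp only [hwdef, Pi.add_apply, Pi.smul_apply, smul_eq_mul]
      have : ∀ j, v j * (u j + ε * r * p j) = u j * v j + (ε * r) * (v j * p j) := by
        intro j; ring
      rw [Finset.sum_congr rfl fun j _ => this j, Finset.sum_add_distrib, htrA,
        ← Finset.mul_sum, ← hs, zero_add, hcrs]
      ring
    have h2 : (∑ j, q j * w j) = r := by
      simp only [hwdef, Pi.add_apply, Pi.smul_apply, smul_eq_mul]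
      have : ∀ j, q j * (u j + ε * r * p j) = u j * q j + (ε * r) * (p j * q j) := by
        intro j; ring
      rw [Finset.sum_congr rfl fun j _ => this j, Finset.sum_add_distrib,
        ← Finset.mul_sum, htrB, mul_zero, add_zero, ← hr]
    rw [h1, h2]
    funext i
    simp only [hwdef, Pi.add_apply, Pi.smul_apply, smul_eq_mul]
    linear_combination (-(c * r * p i)) * hε
  have hrootc : (Matrix.charpoly M).IsRoot c := by
    have := heig 1 (by ring); simpa using this
  have hrootnc : (Matrix.charpoly M).IsRoot (-c) := by
    have := heig (-1) (by ring); simpa using this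
  -- contradiction with hspec
  have hcnc : c ≠ -c := by
    intro h
    apply hc
    have h2c : 2 * c = 0 := by linear_combination h
    exact (mul_eq_zero.mp h2c).resolve_left hK
  have hfin : {x : K | (Matrix.charpoly M).IsRoot x}.Finite :=
    Polynomial.finite_setOf_isRoot (Matrix.charpoly_monic M).ne_zero
  have hsub : ({0, c, -c} : Set K) ⊆ {x : K | (Matrix.charpoly M).IsRoot x} := by
    intro x hx
    rcases hx with h | h | h
    · rw [h]; exact hroot0
    · rw [h]; exact hrootc
    · rw [Set.mem_singleton_iff.mp h]; exact hrootnc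
  have h3 : ({0, c, -c} : Set K).ncard = 3 := by
    rw [Set.ncard_insert_of_notMem, Set.ncard_pair hcnc]
    · simp only [Set.mem_insert_iff, Set.mem_singleton_iff]
      push_neg
      exact ⟨fun h => hc h.symm, fun h => hc (neg_eq_zero.mp h.symm)⟩
  have := hspec M hMV
  have hle := Set.ncard_le_ncard hsub hfin
  omega
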